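/- Let x ∈ ℝ. Define the third version of the third-order Pell polynomials σ : ℕ → ℝ by σ 0 = 3, σ 1 = 2x, σ 2 = 4x², and σ n = 2x·σ(n-1) + σ(n-3) for n ≥ 3. Then for every n ≥ 1, σ n = ∑_{ℓ=0}^{⌊n/3⌋} (n/(n-2ℓ)) · binomial(n-2ℓ, ℓ) · (2x)^{n-3ℓ}, where the coefficient n/(n-2ℓ)·binomial(n-2ℓ,ℓ) is interpreted as a real number (the denominator n-2ℓ is a positive integer for all ℓ in the summation range when n ≥ 1). -/

import Mathlib

open Finset

theorem third_order_pell_third_version_explicit_formula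
    (x : ℝ) (σ : ℕ → ℝ)
    (h0 : σ 0 = 3) (h1 : σ 1 = 2 * x) (h2 : σ 2 = 4 * x ^ 2)
    (hrec : ∀ n, 3 ≤ n → σ n = 2 * x * σ (n - 1) + σ (n - 3)) :
    ∀ n, 1 ≤ n →
      σ n = ∑ ℓ ∈ Finset.range (n / 3 + 1),
        ((n : ℝ) / ((n : ℝ) - 2 * ℓ)) * (Nat.choose (n - 2 * ℓ) ℓ : ℝ) *
          (2 * x) ^ (n - 3 * ℓ) := by
  intro n
  induction n using Nat.strong_induction_on with
  | _ n IH =>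
    intro hn
    match n, hn with
    | 1, _ => norm_num [h1]
    | 2, _ => norm_num [h2]; ring
    | 3, _ =>
      rw [hrec 3 (by norm_num)]
      norm_num [h0, h2, Finset.sum_range_succ]
      ring
    | (k+4), _ =>
      rw [hrec (k+4) (by omega)]
      have e1 : k+4-1 = k+3 := rfl
      have e3 : k+4-3 = k+1 := rfl
      rw [e1, e3, IH (k+3) (by omega) (by omega), IH (k+1) (by omega) (by omega)]
      have hrange : (k+4)/3 + 1 = ((k+1)/3 + 1) + 1 := by omega
      rw [hrange]
      have hext : ∑ ℓ ∈ Finset.range ((k+3)/3+1),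
            ((k+3:ℕ):ℝ)/(((k+3:ℕ):ℝ) - 2*ℓ) * (Nat.choose (k+3-2*ℓ) ℓ : ℝ) * (2*x)^(k+3-3*ℓ)
          = ∑ ℓ ∈ Finset.range (((k+1)/3+1)+1),
            ((k+3:ℕ):ℝ)/(((k+3:ℕ):ℝ) - 2*ℓ) * (Nat.choose (k+3-2*ℓ) ℓ : ℝ) * (2*x)^(k+3-3*ℓ) := by
        refine Finset.sum_subset ?_ ?_
        · rw [Finset.range_subset_range]; omega
        · intro i hi hni
          simp only [Finset.mem_range, not_lt] at hi hni
          have hlt : k+3-2*i < i := by omega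
          rw [Nat.choose_eq_zero_of_lt hlt]
          simp
      rw [hext, Finset.mul_sum, Finset.sum_range_succ', Finset.sum_range_succ' (n := (k+1)/3+1)]
      have hterm : ∀ i ∈ Finset.range ((k+1)/3+1),
          ((k+4:ℕ):ℝ)/(((k+4:ℕ):ℝ) - 2*((i+1:ℕ):ℝ)) * ((Nat.choose (k+4-2*(i+1)) (i+1)) : ℝ) * (2*x)^(k+4-3*(i+1))
          = 2*x*(((k+3:ℕ):ℝ)/(((k+3:ℕ):ℝ) - 2*((i+1:ℕ):ℝ)) * ((Nat.choose (k+3-2*(i+1)) (i+1)) : ℝ) * (2*x)^(k+3-3*(i+1)))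
            + ((k+1:ℕ):ℝ)/(((k+1:ℕ):ℝ) - 2*(i:ℝ)) * ((Nat.choose (k+1-2*i) i) : ℝ) * (2*x)^(k+1-3*i) := by
        intro i hi
        rw [Finset.mem_range] at hi
        have h3 : 3*i ≤ k+1 := by omega
        rcases Nat.lt_or_ge k (3*i) with hc | hc
        · -- 3i = k+1
          have hi1 : 1 ≤ i := by omega
          obtain ⟨m, rfl⟩ : ∃ m, i = m+1 := ⟨i-1, by omega⟩
          have hk : k = 3*m+2 := by omega
          subst hk
          have ea : 3*m+2+4-2*(m+1+1) = m+1+1 := by omega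
          have eb : 3*m+2+4-3*(m+1+1) = 0 := by omega
          have ec : 3*m+2+3-2*(m+1+1) = m+1 := by omega
          have ed : 3*m+2+1-2*(m+1) = m+1 := by omega
          have ee : 3*m+2+1-3*(m+1) = 0 := by omega
          rw [ea, eb, ec, ed, ee, Nat.choose_self, Nat.choose_eq_zero_of_lt (by omega : m+1 < m+1+1), Nat.choose_self]
          push_cast
          have d1 : (3*(m:ℝ)+2+4) - 2*((m:ℝ)+1+1) ≠ 0 := by nlinarith [Nat.cast_nonneg (α := ℝ) m]
          have d2 : (3*(m:ℝ)+2+1) - 2*((m:ℝ)+1) ≠ 0 := by nlinarith [Nat.cast_nonneg (α := ℝ) m]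
          field_simp
          ring
        · obtain ⟨j, hj⟩ := Nat.exists_eq_add_of_le hc
          subst hj
          have ea : 3*i+j+4-2*(i+1) = j+i+2 := by omega
          have eb : 3*i+j+4-3*(i+1) = j+1 := by omega
          have ec : 3*i+j+3-2*(i+1) = j+i+1 := by omega
          have ed : 3*i+j+3-3*(i+1) = j := by omega
          have ee : 3*i+j+1-2*i = j+i+1 := by omega
          have ef : 3*i+j+1-3*i = j+1 := by omega
          rw [ea, eb, ec, ed, ee, ef]
          have hA : ((j+i+2:ℕ) * Nat.choose (j+i+1) i : ℝ) = ((i+1:ℕ)) * Nat.choose (j+i+2) (i+1) := by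
            have h := Nat.add_one_mul_choose_eq (j+i+1) i
            have h' : (j+i+2) * Nat.choose (j+i+1) i = (i+1) * Nat.choose (j+i+2) (i+1) := by
              rw [show j+i+1+1 = j+i+2 from rfl] at h
              rw [h, mul_comm]
            exact_mod_cast h'
          have hB : ((Nat.choose (j+i+1) (i+1) : ℕ) * (j+i+2:ℕ) : ℝ) = ((Nat.choose (j+i+2) (i+1) : ℕ)) * ((j+1:ℕ)) := by
            have h := Nat.choose_mul_succ_eq (j+i+1) (i+1)
            have h2 : j+i+1+1-(i+1) = j+1 := by omega
            rw [h2, show j+i+1+1 = j+i+2 from rfl] at h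
            exact_mod_cast h
          have d1 : (3*(i:ℝ)+(j:ℝ)+4) - 2*((i:ℝ)+1) ≠ 0 := by
            have h : (3*(i:ℝ)+(j:ℝ)+4) - 2*((i:ℝ)+1) = (i:ℝ)+(j:ℝ)+2 := by ring
            rw [h]; positivity
          have d2 : (3*(i:ℝ)+(j:ℝ)+3) - 2*((i:ℝ)+1) ≠ 0 := by
            have h : (3*(i:ℝ)+(j:ℝ)+3) - 2*((i:ℝ)+1) = (i:ℝ)+(j:ℝ)+1 := by ring
            rw [h]; positivity
          have d3 : (3*(i:ℝ)+(j:ℝ)+1) - 2*(i:ℝ) ≠ 0 := by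
            have h : (3*(i:ℝ)+(j:ℝ)+1) - 2*(i:ℝ) = (i:ℝ)+(j:ℝ)+1 := by ring
            rw [h]; positivity
          push_cast
          push_cast at hA hB
          rw [show (3*(i:ℝ)+(j:ℝ)+4) - 2*((i:ℝ)+1) = (i:ℝ)+(j:ℝ)+2 by ring,
            show (3*(i:ℝ)+(j:ℝ)+3) - 2*((i:ℝ)+1) = (i:ℝ)+(j:ℝ)+1 by ring,
            show (3*(i:ℝ)+(j:ℝ)+1) - 2*(i:ℝ) = (i:ℝ)+(j:ℝ)+1 by ring]
          field_simp
          linear_combination (-(3*(i:ℝ)+(j:ℝ)+3) * (2*x)^(j+1)) * hB +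
            (-(3*(i:ℝ)+(j:ℝ)+1) * (2*x)^(j+1)) * hA
      rw [Finset.sum_congr rfl hterm, Finset.sum_add_distrib]
      have hk3 : ((k:ℝ)+3) ≠ 0 := by positivity
      have hk4 : ((k:ℝ)+4) ≠ 0 := by positivity
      push_cast
      simp only [Nat.cast_zero, mul_zero, sub_zero, Nat.choose_zero_right, Nat.cast_one,
        Nat.sub_zero, Nat.mul_zero]
      rw [div_self hk3, div_self hk4]
      ring
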